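/- If S is a real symmetric Metzler matrix (nonnegative off-diagonal entries) and there exists a strictly positive vector w with S w ≪ 0 (all entries negative), then S is negative definite. -/

import Mathlib

theorem symm_metzler_negVec_negDef {n : ℕ} (S : Matrix (Fin n) (Fin n) ℝ)
    (hsym : S.IsSymm) (hoff : ∀ i j, i ≠ j → 0 ≤ S i j)
    (w : Fin n → ℝ) (hw : ∀ i, 0 < w i) (hSw : ∀ i, S.mulVec w i < 0) :
    (-S).PosDef := by
  have hsymm : ∀ i j, S j i = S i j := fun i j => hsym.apply i j
  rw [Matrix.posDef_iff_dotProduct_mulVec]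
  constructor
  · have hH : S.IsHermitian := by
      ext i j
      simpa [Matrix.conjTranspose_apply] using hsymm i j
    exact hH.neg
  · intro x hx
    have key : dotProduct x (S.mulVec x) < 0 := by
      have step1 : dotProduct x (S.mulVec x) ≤
          ∑ i, ∑ j, S i j * (w j * x i ^ 2 / w i + w i * x j ^ 2 / w j) / 2 := by
        simp only [dotProduct, Matrix.mulVec]
        apply Finset.sum_le_sum
        intro i _
        rw [Finset.mul_sum]
        apply Finset.sum_le_sum
        intro j _
        have hwi := hw i
        have hwj := hw j
        have hA : w i * (w j * x i ^ 2 / w i) = w j * x i ^ 2 := by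
          field_simp
        have hB : w j * (w i * x j ^ 2 / w j) = w i * x j ^ 2 := by
          field_simp
        by_cases hij : i = j
        · subst hij
          rw [show w i * x i ^ 2 / w i = x i ^ 2 by field_simp]
          exact le_of_eq (by ring)
        · have hS := hoff i j hij
          have hA2 : w i * w j * (w j * x i ^ 2 / w i) = w j ^ 2 * x i ^ 2 := by
            field_simp
          have hB2 : w i * w j * (w i * x j ^ 2 / w j) = w i ^ 2 * x j ^ 2 := by
            field_simp
          nlinarith [mul_nonneg hS (sq_nonneg (w j * x i - w i * x j)),
            mul_pos hwi hwj, hA2, hB2]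
      have step2 : ∑ i, ∑ j, S i j * (w j * x i ^ 2 / w i + w i * x j ^ 2 / w j) / 2
          = ∑ i, S.mulVec w i * (x i ^ 2 / w i) := by
        have expand : ∀ i j : Fin n, S i j * (w j * x i ^ 2 / w i + w i * x j ^ 2 / w j) / 2
            = S i j * (w j * x i ^ 2 / w i) / 2 + S i j * (w i * x j ^ 2 / w j) / 2 :=
          fun i j => by ring
        simp_rw [expand, Finset.sum_add_distrib]
        have swap : ∑ i, ∑ j, S i j * (w i * x j ^ 2 / w j) / 2
            = ∑ i, ∑ j, S i j * (w j * x i ^ 2 / w i) / 2 := by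
          rw [Finset.sum_comm]
          exact Finset.sum_congr rfl fun i _ => Finset.sum_congr rfl fun j _ => by
            rw [hsymm i j]
        rw [swap, ← Finset.sum_add_distrib]
        simp_rw [← Finset.sum_add_distrib, Matrix.mulVec, dotProduct, Finset.sum_mul]
        exact Finset.sum_congr rfl fun i _ => Finset.sum_congr rfl fun j _ => by ring
      have step3 : ∑ i, S.mulVec w i * (x i ^ 2 / w i) < 0 := by
        obtain ⟨i0, hi0⟩ : ∃ i, x i ≠ 0 := by
          by_contra h
          push_neg at h
          exact hx (funext h)
        have : ∑ i, S.mulVec w i * (x i ^ 2 / w i) < ∑ _i : Fin n, (0 : ℝ) := by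
          apply Finset.sum_lt_sum
          · intro i _
            exact mul_nonpos_of_nonpos_of_nonneg (hSw i).le
              (div_nonneg (sq_nonneg _) (hw i).le) |>.trans_eq rfl
          · exact ⟨i0, Finset.mem_univ i0,
              mul_neg_of_neg_of_pos (hSw i0) (div_pos (by positivity) (hw i0))⟩
        simpa using this
      linarith [step1.trans_eq step2]
    have hneg : dotProduct x ((-S).mulVec x) = -(dotProduct x (S.mulVec x)) := by
      rw [Matrix.neg_mulVec, dotProduct_neg]
    simp only [star_trivial]
    rw [hneg]
    simpa using neg_pos.mpr key
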